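/- Fix n ≥ 0 and work over R = ℤ[a,q]. For 0 ≤ i ≤ n let g_i(x) = Σ_{k=0}^i A_{ik} a^k x^k, where the A_{ik} ∈ R are arbitrary with A_{ii} = 1 for every i. Then the (n+1)×(n+1) matrix (g_i([j]_q))_{0≤i,j≤n}, whose (i,j) entry is g_i evaluated at [j]_q ∈ R, has SSNF diag(1, a q^{binom(1,2)} [1]!_q, a² q^{binom(2,2)} [2]!_q, …, a^n q^{binom(n,2)} [n]!_q) over R, where binom(m,2) = m(m−1)/2. In particular, the Vandermonde matrix ((1 + a[j]_q)^i)_{0≤i,j≤n} has this SSNF over ℤ[a,q], and the Vandermonde matrix (([j+1]_q)^i)_{0≤i,j≤n} has SSNF diag(1, q^{binom(2,2)}[1]!_q, q^{binom(3,2)}[2]!_q, …, q^{binom(n+1,2)}[n]!_q) over ℤ[q]. -/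

import Mathlib

-- We work in `ℤ[a,q] = MvPolynomial (Fin 2) ℤ`, with `a = X 0` and `q = X 1`.
namespace Stmt19

noncomputable abbrev a : MvPolynomial (Fin 2) ℤ := MvPolynomial.X 0
noncomputable abbrev q : MvPolynomial (Fin 2) ℤ := MvPolynomial.X 1

/-- `[m]_q = 1 + q + ⋯ + q^{m-1}` in `ℤ[a,q]`. -/
noncomputable def qNat (m : ℕ) : MvPolynomial (Fin 2) ℤ := ∑ i ∈ Finset.range m, q ^ i

/-- `[m]!_q = [1]_q [2]_q ⋯ [m]_q` in `ℤ[a,q]`. -/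
noncomputable def qFactorial (m : ℕ) : MvPolynomial (Fin 2) ℤ :=
  ∏ i ∈ Finset.range m, qNat (i + 1)

/-- `[m]_q` in `ℤ[q]`. -/
noncomputable def qNat' (m : ℕ) : Polynomial ℤ := ∑ i ∈ Finset.range m, Polynomial.X ^ i

/-- `[m]!_q` in `ℤ[q]`. -/
noncomputable def qFactorial' (m : ℕ) : Polynomial ℤ := ∏ i ∈ Finset.range m, qNat' (i + 1)

/-- `A` has special Smith normal form `diag d` over `R`: `P * A * Q = diagonal d` for some
`P, Q` of determinant `1`, and `d j ∣ d i` whenever `j ≤ i`. -/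
def HasSSNF {R : Type*} [CommRing R] {n : ℕ} (A : Matrix (Fin n) (Fin n) R) (d : Fin n → R) :
    Prop :=
  (∃ P Q : Matrix (Fin n) (Fin n) R, P.det = 1 ∧ Q.det = 1 ∧ P * A * Q = Matrix.diagonal d) ∧
  ∀ i j : Fin n, j ≤ i → d j ∣ d i

section Aux
variable {R : Type*} [CommRing R]

def qn (t : R) (m : ℕ) : R := ∑ i ∈ Finset.range m, t ^ i

def qfac (t : R) (m : ℕ) : R := ∏ i ∈ Finset.range m, qn t (i + 1)

def qbin (t : R) : ℕ → ℕ → R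
  | _, 0 => 1
  | 0, _ + 1 => 0
  | j + 1, k + 1 => qbin t j k + t ^ (k + 1) * qbin t j (k + 1)

def St (t : R) (s : ℕ) : ℕ → ℕ → R
  | 0, 0 => 1
  | 0, _ + 1 => 0
  | i + 1, 0 => qn t s * St t s i 0
  | i + 1, k + 1 => St t s i k + qn t (k + 1 + s) * St t s i (k + 1)

variable (t : R)

lemma qn_zero : qn t 0 = 0 := by simp [qn]

lemma qn_succ (m : ℕ) : qn t (m + 1) = qn t m + t ^ m := Finset.sum_range_succ _ _

lemma qn_add (l m : ℕ) : qn t (l + m) = qn t l + t ^ l * qn t m := by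
  induction m with
  | zero => simp [qn]
  | succ m ih => rw [← add_assoc, qn_succ, ih, qn_succ]; ring

lemma qbin_eq_zero : ∀ j k : ℕ, j < k → qbin t j k = 0 := by
  intro j
  induction j with
  | zero =>
    intro k hk
    cases k with
    | zero => omega
    | succ k => rfl
  | succ j ih =>
    intro k hk
    cases k with
    | zero => omega
    | succ k =>
      show qbin t j k + t ^ (k + 1) * qbin t j (k + 1) = 0
      rw [ih k (by omega), ih (k+1) (by omega)]
      ring

lemma qbin_self : ∀ j : ℕ, qbin t j j = 1 := by
  intro j
  induction j with
  | zero => rfl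
  | succ j ih =>
    show qbin t j j + t ^ (j + 1) * qbin t j (j + 1) = 1
    rw [ih, qbin_eq_zero t j (j+1) (by omega)]
    ring

lemma qfac_succ (k : ℕ) : qfac t (k + 1) = qfac t k * qn t (k + 1) := Finset.prod_range_succ _ _

lemma Fk_eq_zero {j k : ℕ} (h : j < k) : (∏ l ∈ Finset.range k, qn t (j - l)) = 0 :=
  Finset.prod_eq_zero (Finset.mem_range.mpr h) (by simp [qn])

lemma qfac_mul_qbin : ∀ j k : ℕ, qfac t k * qbin t j k = ∏ l ∈ Finset.range k, qn t (j - l) := by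
  intro j
  induction j with
  | zero =>
    intro k
    cases k with
    | zero => simp [qfac, qbin]
    | succ k => rw [Fk_eq_zero t (by omega)]; show _ * (0:R) = 0; ring
  | succ j ih =>
    intro k
    cases k with
    | zero => simp [qfac, qbin]
    | succ k =>
      have hR : (∏ l ∈ Finset.range (k+1), qn t (j + 1 - l))
          = (∏ l ∈ Finset.range k, qn t (j - l)) * qn t (j + 1) := by
        rw [Finset.prod_range_succ' (fun l => qn t (j + 1 - l)) k]
        simp [Nat.succ_sub_succ]
      rw [hR]
      show qfac t (k+1) * (qbin t j k + t ^ (k + 1) * qbin t j (k + 1)) = _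
      rcases le_or_gt k j with h | h
      · have h1 : qn t (j + 1) = qn t (k + 1) + t ^ (k + 1) * qn t (j - k) := by
          have : j + 1 = (k + 1) + (j - k) := by omega
          rw [this, qn_add]
        rw [h1, qfac_succ, mul_add, mul_add]
        have e1 : qfac t k * qn t (k+1) * qbin t j k
            = (∏ l ∈ Finset.range k, qn t (j - l)) * qn t (k+1) := by
          rw [← ih k]; ring
        have e2 : qfac t k * qn t (k+1) * (t ^ (k+1) * qbin t j (k+1))
            = (∏ l ∈ Finset.range k, qn t (j - l)) * (t ^ (k+1) * qn t (j - k)) := by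
          have := ih (k+1)
          rw [qfac_succ] at this
          calc qfac t k * qn t (k+1) * (t ^ (k+1) * qbin t j (k+1))
              = t ^ (k+1) * (qfac t k * qn t (k+1) * qbin t j (k+1)) := by ring
            _ = t ^ (k+1) * (∏ l ∈ Finset.range (k+1), qn t (j - l)) := by rw [this]
            _ = _ := by rw [Finset.prod_range_succ]; ring
        rw [e1, e2]
      · rw [Fk_eq_zero t h, qbin_eq_zero t j k h, qbin_eq_zero t j (k+1) (by omega)]
        ring

lemma St_eq_zero (s : ℕ) : ∀ i k : ℕ, i < k → St t s i k = 0 := by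
  intro i
  induction i with
  | zero =>
    intro k hk
    cases k with
    | zero => omega
    | succ k => rfl
  | succ i ih =>
    intro k hk
    cases k with
    | zero => omega
    | succ k =>
      show St t s i k + qn t (k + 1 + s) * St t s i (k + 1) = 0
      rw [ih k (by omega), ih (k+1) (by omega)]
      ring

lemma St_self (s : ℕ) : ∀ i : ℕ, St t s i i = 1 := by
  intro i
  induction i with
  | zero => rfl
  | succ i ih =>
    show St t s i i + qn t (i + 1 + s) * St t s i (i + 1) = 1
    rw [ih, St_eq_zero t s i (i+1) (by omega)]
    ring

def fk (t : R) (s j k : ℕ) : R := ∏ l ∈ Finset.range k, (qn t (j + s) - qn t (l + s))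

lemma fk_zero (s j : ℕ) : fk t s j 0 = 1 := by simp [fk]

lemma fk_succ (s j k : ℕ) :
    fk t s j (k + 1) = fk t s j k * (qn t (j + s) - qn t (k + s)) := Finset.prod_range_succ _ _

lemma fk_mul_qn (s j k : ℕ) :
    fk t s j k * qn t (j + s) = fk t s j (k + 1) + qn t (k + s) * fk t s j k := by
  rw [fk_succ]; ring

lemma newton (s : ℕ) : ∀ i j : ℕ,
    (qn t (j + s)) ^ i = ∑ k ∈ Finset.range (i + 1), St t s i k * fk t s j k := by
  intro i
  induction i with
  | zero => intro j; simp [fk_zero, St]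
  | succ i ih =>
    intro j
    have step1 : (qn t (j + s)) ^ (i + 1)
        = ∑ k ∈ Finset.range (i + 1), (St t s i k * fk t s j (k + 1)
            + St t s i k * (qn t (k + s) * fk t s j k)) := by
      rw [pow_succ, ih, Finset.sum_mul]
      refine Finset.sum_congr rfl fun k _ => ?_
      rw [mul_assoc, fk_mul_qn]
      ring
    rw [step1, Finset.sum_add_distrib]
    have step2 : ∑ k ∈ Finset.range (i + 1), St t s i k * (qn t (k + s) * fk t s j k)
        = ∑ k ∈ Finset.range (i + 2), St t s i k * (qn t (k + s) * fk t s j k) := by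
      rw [Finset.sum_range_succ _ (i + 1), St_eq_zero t s i (i + 1) (by omega)]
      ring
    rw [step2, Finset.sum_range_succ' (fun k => St t s i k * (qn t (k + s) * fk t s j k)) (i + 1)]
    rw [Finset.sum_range_succ' (fun k => St t s (i + 1) k * fk t s j k) (i + 1)]
    have hSt0 : St t s (i + 1) 0 = qn t s * St t s i 0 := rfl
    have hfk0 : fk t s j 0 = 1 := fk_zero t s j
    rw [hSt0, hfk0, ← add_assoc, ← Finset.sum_add_distrib]
    have : ∀ k ∈ Finset.range (i + 1),
        St t s i k * fk t s j (k + 1) + St t s i (k + 1) * (qn t (k + 1 + s) * fk t s j (k + 1))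
        = St t s (i + 1) (k + 1) * fk t s j (k + 1) := by
      intro k _
      have hrec : St t s (i + 1) (k + 1) = St t s i k + qn t (k + 1 + s) * St t s i (k + 1) := rfl
      rw [hrec]
      ring
    rw [Finset.sum_congr rfl this]
    simp [St]
    ring

lemma fk_eq (s j k : ℕ) :
    fk t s j k = t ^ (k * s + k.choose 2) * (qfac t k * qbin t j k) := by
  rcases le_or_gt k j with h | h
  · have hfac : ∀ l ∈ Finset.range k,
        qn t (j + s) - qn t (l + s) = t ^ (l + s) * qn t (j - l) := by
      intro l hl
      have hl' : l < k := Finset.mem_range.mp hl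
      have : j + s = (l + s) + (j - l) := by omega
      rw [this, qn_add]
      ring
    rw [fk, Finset.prod_congr rfl hfac, Finset.prod_mul_distrib, Finset.prod_pow_eq_pow_sum]
    have hexp : ∑ l ∈ Finset.range k, (l + s) = k * s + k.choose 2 := by
      rw [Finset.sum_add_distrib, Finset.sum_const, Finset.card_range, smul_eq_mul,
        Finset.sum_range_id, Nat.choose_two_right]
      omega
    rw [hexp, qfac_mul_qbin]
  · rw [fk, Finset.prod_eq_zero (Finset.mem_range.mpr h) (by ring),
      qbin_eq_zero t j k h]
    ring

lemma key (s n : ℕ) {i : ℕ} (hi : i ≤ n) (j : ℕ) :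
    (qn t (j + s)) ^ i = ∑ k ∈ Finset.range (n + 1),
      St t s i k * (t ^ (k * s + k.choose 2) * (qfac t k * qbin t j k)) := by
  rw [newton t s i j]
  have hsub : Finset.range (i + 1) ⊆ Finset.range (n + 1) := Finset.range_subset_range.mpr (by omega)
  have h0 : ∀ k ∈ Finset.range (n + 1), k ∉ Finset.range (i + 1) →
      St t s i k * fk t s j k = 0 := by
    intro k _ hk'
    have hik : i < k := by simp only [Finset.mem_range] at hk'; omega
    rw [St_eq_zero t s i k hik]
    ring
  rw [Finset.sum_subset hsub h0]
  exact Finset.sum_congr rfl fun k _ => by rw [fk_eq]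

end Aux

section Mat
variable {R : Type*} [CommRing R] {n : ℕ}

lemma hasSSNF_of_factor {M T1 T2 : Matrix (Fin n) (Fin n) R} {d : Fin n → R}
    (hfac : M = T1 * Matrix.diagonal d * T2) (h1 : T1.det = 1) (h2 : T2.det = 1)
    (hd : ∀ i j : Fin n, j ≤ i → d j ∣ d i) : HasSSNF M d := by
  have hu1 : IsUnit T1.det := h1 ▸ isUnit_one
  have hu2 : IsUnit T2.det := h2 ▸ isUnit_one
  refine ⟨⟨T1⁻¹, T2⁻¹, ?_, ?_, ?_⟩, hd⟩
  · rw [Matrix.det_nonsing_inv, h1, Ring.inverse_one]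
  · rw [Matrix.det_nonsing_inv, h2, Ring.inverse_one]
  · rw [hfac, ← Matrix.mul_assoc T1⁻¹ (T1 * Matrix.diagonal d) T2,
      Matrix.mul_nonsing_inv_cancel_right _ _ hu2,
      ← Matrix.mul_assoc T1⁻¹ T1 (Matrix.diagonal d), Matrix.nonsing_inv_mul _ hu1,
      Matrix.one_mul]

lemma det_eq_one_of_lower {M : Matrix (Fin n) (Fin n) R}
    (hlt : ∀ i j : Fin n, i < j → M i j = 0) (hdiag : ∀ i, M i i = 1) : M.det = 1 := by
  rw [Matrix.det_of_lowerTriangular M (fun i j h => hlt i j h)]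
  exact Finset.prod_eq_one fun i _ => hdiag i

lemma det_eq_one_of_upper {M : Matrix (Fin n) (Fin n) R}
    (hlt : ∀ i j : Fin n, j < i → M i j = 0) (hdiag : ∀ i, M i i = 1) : M.det = 1 := by
  rw [Matrix.det_of_upperTriangular (show M.BlockTriangular id from fun i j h => hlt i j h)]
  exact Finset.prod_eq_one fun i _ => hdiag i

end Mat

theorem part3 (n : ℕ) :
    HasSSNF (fun i j : Fin (n+1) => qNat' ((j : ℕ) + 1) ^ (i : ℕ))
      (fun i => Polynomial.X ^ (((i : ℕ) + 1).choose 2) * qFactorial' (i : ℕ)) := by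
  have hd : ∀ i j : Fin (n+1), j ≤ i →
      (Polynomial.X ^ (((j:ℕ)+1).choose 2) * qFactorial' (j:ℕ)) ∣
        (Polynomial.X ^ (((i:ℕ)+1).choose 2) * qFactorial' (i:ℕ)) := by
    intro i j hij
    have hji : (j:ℕ) ≤ (i:ℕ) := hij
    exact mul_dvd_mul (pow_dvd_pow _ (Nat.choose_le_choose 2 (by omega)))
      (Finset.prod_dvd_prod_of_subset _ _ _ (Finset.range_subset_range.mpr hji))
  refine hasSSNF_of_factor (T1 := Matrix.of fun i k : Fin (n+1) => St Polynomial.X 1 (i:ℕ) (k:ℕ))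
    (T2 := Matrix.of fun k j : Fin (n+1) => qbin Polynomial.X (j:ℕ) (k:ℕ)) ?_ ?_ ?_ hd
  · funext i j
    show qNat' ((j:ℕ) + 1) ^ (i:ℕ) = _
    erw [Matrix.mul_apply]
    simp only [Matrix.mul_diagonal, Matrix.of_apply]
    rw [Fin.sum_univ_eq_sum_range (fun k => St Polynomial.X 1 (i:ℕ) k *
        (Polynomial.X ^ ((k+1).choose 2) * qFactorial' k) * qbin Polynomial.X (j:ℕ) k) (n+1)]
    have e : qNat' ((j:ℕ) + 1) = qn Polynomial.X ((j:ℕ) + 1) := rfl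
    rw [e, key Polynomial.X 1 n (by omega : (i:ℕ) ≤ n) (j:ℕ)]
    refine Finset.sum_congr rfl fun k _ => ?_
    have hc : (k+1).choose 2 = k * 1 + k.choose 2 := by
      rw [show (2:ℕ) = 1 + 1 from rfl, Nat.choose_succ_succ' k 1, Nat.choose_one_right]
      ring
    have hq : qFactorial' k = qfac Polynomial.X k := rfl
    rw [hc, hq]
    ring
  · exact det_eq_one_of_lower
      (fun i j h => St_eq_zero Polynomial.X 1 (i:ℕ) (j:ℕ) h)
      (fun i => St_self Polynomial.X 1 (i:ℕ))
  · exact det_eq_one_of_upper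
      (fun i j h => qbin_eq_zero Polynomial.X (j:ℕ) (i:ℕ) h)
      (fun i => qbin_self Polynomial.X (i:ℕ))

theorem part1 (n : ℕ) (A : ℕ → ℕ → MvPolynomial (Fin 2) ℤ) (hA : ∀ i : ℕ, i ≤ n → A i i = 1) :
    HasSSNF (fun i j : Fin (n+1) =>
        ∑ k ∈ Finset.range ((i : ℕ) + 1), A (i : ℕ) k * a ^ k * qNat (j : ℕ) ^ k)
      (fun i => a ^ (i : ℕ) * q ^ ((i : ℕ).choose 2) * qFactorial (i : ℕ)) := by
  have hd : ∀ i j : Fin (n+1), j ≤ i →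
      (a ^ (j:ℕ) * q ^ ((j:ℕ).choose 2) * qFactorial (j:ℕ)) ∣
        (a ^ (i:ℕ) * q ^ ((i:ℕ).choose 2) * qFactorial (i:ℕ)) := by
    intro i j hij
    have hji : (j:ℕ) ≤ (i:ℕ) := hij
    exact mul_dvd_mul (mul_dvd_mul (pow_dvd_pow _ hji)
        (pow_dvd_pow _ (Nat.choose_le_choose 2 hji)))
      (Finset.prod_dvd_prod_of_subset _ _ _ (Finset.range_subset_range.mpr hji))
  refine hasSSNF_of_factor (T1 := Matrix.of fun i k : Fin (n+1) =>
      ∑ m ∈ Finset.range ((i:ℕ) + 1), A (i:ℕ) m * a ^ (m - (k:ℕ)) * St q 0 m (k:ℕ))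
    (T2 := Matrix.of fun k j : Fin (n+1) => qbin q (j:ℕ) (k:ℕ)) ?_ ?_ ?_ hd
  · funext i j
    show ∑ k ∈ Finset.range ((i:ℕ) + 1), A (i:ℕ) k * a ^ k * qNat (j:ℕ) ^ k = _
    erw [Matrix.mul_apply]
    simp only [Matrix.mul_diagonal, Matrix.of_apply]
    rw [Fin.sum_univ_eq_sum_range (fun k =>
        (∑ m ∈ Finset.range ((i:ℕ) + 1), A (i:ℕ) m * a ^ (m - k) * St q 0 m k) *
          (a ^ k * q ^ (k.choose 2) * qFactorial k) * qbin q (j:ℕ) k) (n+1)]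
    simp only [Finset.sum_mul]
    rw [Finset.sum_comm]
    refine Finset.sum_congr rfl fun m hm => ?_
    have hmn : m ≤ n := by
      have := i.isLt
      simp only [Finset.mem_range] at hm
      omega
    have hkey : qNat (j:ℕ) ^ m = ∑ k ∈ Finset.range (n + 1),
        St q 0 m k * (q ^ (k * 0 + k.choose 2) * (qfac q k * qbin q (j:ℕ) k)) :=
      key q 0 n hmn (j:ℕ)
    rw [hkey, Finset.mul_sum]
    refine Finset.sum_congr rfl fun k _ => ?_
    rcases le_or_gt k m with h | h
    · have hq : qFactorial k = qfac q k := rfl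
      have ha : a ^ m = a ^ (m - k) * a ^ k := by rw [← pow_add]; congr 1; omega
      rw [hq, ha, Nat.mul_zero, Nat.zero_add]
      ring
    · rw [St_eq_zero q 0 m k h]
      ring
  · refine det_eq_one_of_lower (fun i k h => ?_) (fun i => ?_)
    · rw [Matrix.of_apply]
      refine Finset.sum_eq_zero fun m hm => ?_
      have hik : (i:ℕ) < (k:ℕ) := h
      have hmk : m < (k:ℕ) := by
        simp only [Finset.mem_range] at hm
        omega
      rw [St_eq_zero q 0 m (k:ℕ) hmk]
      ring
    · rw [Matrix.of_apply, Finset.sum_range_succ]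
      have h0 : ∑ m ∈ Finset.range (i:ℕ), A (i:ℕ) m * a ^ (m - (i:ℕ)) * St q 0 m (i:ℕ) = 0 :=
        Finset.sum_eq_zero fun m hm => by
          rw [St_eq_zero q 0 m (i:ℕ) (Finset.mem_range.mp hm)]; ring
      have hin : (i:ℕ) ≤ n := by have := i.isLt; omega
      rw [h0, hA (i:ℕ) hin, St_self, Nat.sub_self, pow_zero]
      ring
  · exact det_eq_one_of_upper
      (fun k j h => qbin_eq_zero q (j:ℕ) (k:ℕ) h)
      (fun k => qbin_self q (k:ℕ))

theorem part2 (n : ℕ) :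
    HasSSNF (fun i j : Fin (n+1) => (1 + a * qNat (j : ℕ)) ^ (i : ℕ))
      (fun i => a ^ (i : ℕ) * q ^ ((i : ℕ).choose 2) * qFactorial (i : ℕ)) := by
  have h := part1 n (fun i k => (Nat.choose i k : MvPolynomial (Fin 2) ℤ))
    (fun i _ => by simp)
  have hM : (fun i j : Fin (n+1) => (1 + a * qNat (j : ℕ)) ^ (i : ℕ))
      = (fun i j : Fin (n+1) => ∑ k ∈ Finset.range ((i : ℕ) + 1),
          (Nat.choose (i:ℕ) k : MvPolynomial (Fin 2) ℤ) * a ^ k * qNat (j : ℕ) ^ k) := by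
    funext i j
    rw [add_comm (1 : MvPolynomial (Fin 2) ℤ), add_pow]
    refine Finset.sum_congr rfl fun k _ => ?_
    rw [mul_pow, one_pow]
    ring
  rw [hM]
  exact h

/-- For any coefficients `A i k ∈ ℤ[a,q]` with `A i i = 1`, putting
`g_i(x) = ∑_{k=0}^i A i k a^k x^k`, the matrix `(g_i([j]_q))_{0≤i,j≤n}` has SSNF
`diag(1, a q^{C(1,2)} [1]!_q, …, aⁿ q^{C(n,2)} [n]!_q)` over `ℤ[a,q]`. In particular the
Vandermonde matrix `((1 + a[j]_q)^i)` has this SSNF, and (over `ℤ[q]`) the Vandermonde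
matrix `(([j+1]_q)^i)` has SSNF `diag(1, q^{C(2,2)}[1]!_q, …, q^{C(n+1,2)}[n]!_q)`. -/
theorem vandermonde_SSNF (n : ℕ) :
    (∀ A : ℕ → ℕ → MvPolynomial (Fin 2) ℤ, (∀ i : ℕ, i ≤ n → A i i = 1) →
      HasSSNF (fun i j : Fin (n+1) =>
          ∑ k ∈ Finset.range ((i : ℕ) + 1), A (i : ℕ) k * a ^ k * qNat (j : ℕ) ^ k)
        (fun i => a ^ (i : ℕ) * q ^ ((i : ℕ).choose 2) * qFactorial (i : ℕ))) ∧
    HasSSNF (fun i j : Fin (n+1) => (1 + a * qNat (j : ℕ)) ^ (i : ℕ))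
      (fun i => a ^ (i : ℕ) * q ^ ((i : ℕ).choose 2) * qFactorial (i : ℕ)) ∧
    HasSSNF (fun i j : Fin (n+1) => qNat' ((j : ℕ) + 1) ^ (i : ℕ))
      (fun i => Polynomial.X ^ (((i : ℕ) + 1).choose 2) * qFactorial' (i : ℕ)) := by
  exact ⟨fun A hA => part1 n A hA, part2 n, part3 n⟩

end Stmt19
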